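/- Let (Q_i)_{i≥1} be positive reals, (a_i)_{i≥1} positive with inf_i a_i > 0, and suppose Q̄ := sup_i Q_i/Q_{i+1} < ∞ and Q̲ := inf_i Q_i/Q_{i+1} > 0, ā := sup_i a_i/a_{i+1} < ∞, a̲ := inf_i a_i/a_{i+1} > 0. Let c be a nonnegative sequence with c_1 < δ for some δ > 0 and Σ a_i c_i < ∞. Then D̄(c) := Σ_{i≥1} a_i Q_i (√(c_1 c_i/Q_i) − √(c_{i+1}/Q_{i+1}))² ≥ Q̲·a̲·(Σ_i a_i c_i − a_1 δ) − 2√δ·√(Q̄·ā)·(Σ_i a_i c_i). -/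

import Mathlib

set_option maxHeartbeats 1000000

private lemma sqrt_amgm (u v : ℝ) (hu : 0 ≤ u) (hv : 0 ≤ v) :
    Real.sqrt (u * v) ≤ (u + v) / 2 := by
  have h : Real.sqrt (u * v) ≤ Real.sqrt (((u + v) / 2) ^ 2) :=
    Real.sqrt_le_sqrt (by nlinarith [sq_nonneg (u - v)])
  rwa [Real.sqrt_sq (by positivity)] at h

private lemma term_lb (qi qj ai aj ci cj c0 δ Qlow Qbar alow abar : ℝ)
    (hqi : 0 < qi) (hqj : 0 < qj) (hai : 0 < ai) (haj : 0 < aj)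
    (hci : 0 ≤ ci) (hcj : 0 ≤ cj) (hc0 : 0 ≤ c0) (hc0δ : c0 ≤ δ)
    (hQl : Qlow ≤ qi / qj) (hQb : qi / qj ≤ Qbar)
    (hal : alow ≤ ai / aj) (hab : ai / aj ≤ abar)
    (hQlow : 0 < Qlow) (halow : 0 < alow) :
    Qlow * alow * (aj * cj) - Real.sqrt δ * Real.sqrt (Qbar * abar) * (ai * ci + aj * cj)
      ≤ ai * qi * (Real.sqrt (c0 * ci / qi) - Real.sqrt (cj / qj)) ^ 2 := by
  have hq : (0:ℝ) < qi / qj := div_pos hqi hqj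
  have ha' : (0:ℝ) < ai / aj := div_pos hai haj
  have hQb0 : 0 ≤ Qbar := le_trans hq.le hQb
  have hab0 : 0 ≤ abar := le_trans ha'.le hab
  set x := Real.sqrt (c0 * ci / qi) with hxdef
  set y := Real.sqrt (cj / qj) with hydef
  have hx2 : x ^ 2 = c0 * ci / qi := Real.sq_sqrt (by positivity)
  have hy2 : y ^ 2 = cj / qj := Real.sq_sqrt (by positivity)
  have h1 : qi * (x * y) = Real.sqrt (c0 * (qi / qj) * (ci * cj)) := by
    rw [hxdef, hydef, ← Real.sqrt_mul (by positivity), ← Real.sqrt_sq hqi.le,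
      ← Real.sqrt_mul (by positivity)]
    congr 1
    field_simp
    rw [Real.sq_sqrt (by positivity)]
    ring
  have h2 : Real.sqrt (c0 * (qi / qj) * (ci * cj))
      = Real.sqrt c0 * Real.sqrt (qi / qj) * Real.sqrt (ci * cj) := by
    rw [Real.sqrt_mul (by positivity), Real.sqrt_mul hc0]
  have h3 : ai * Real.sqrt (ci * cj) = Real.sqrt ((ai / aj) * ((ai * ci) * (aj * cj))) := by
    rw [← Real.sqrt_sq hai.le, ← Real.sqrt_mul (by positivity)]
    congr 1
    field_simp
    rw [Real.sq_sqrt (by positivity)]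
    ring
  have h4 : Real.sqrt ((ai / aj) * ((ai * ci) * (aj * cj)))
      ≤ Real.sqrt abar * Real.sqrt ((ai * ci) * (aj * cj)) := by
    rw [← Real.sqrt_mul hab0]
    apply Real.sqrt_le_sqrt
    apply mul_le_mul_of_nonneg_right hab (by positivity)
  have h5 : Real.sqrt ((ai * ci) * (aj * cj)) ≤ (ai * ci + aj * cj) / 2 :=
    sqrt_amgm _ _ (by positivity) (by positivity)
  have hcross : ai * (qi * (x * y)) ≤
      Real.sqrt δ * Real.sqrt (Qbar * abar) * ((ai * ci + aj * cj) / 2) := by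
    rw [h1, h2, Real.sqrt_mul hQb0]
    have hd : Real.sqrt c0 ≤ Real.sqrt δ := Real.sqrt_le_sqrt hc0δ
    have hqb : Real.sqrt (qi / qj) ≤ Real.sqrt Qbar := Real.sqrt_le_sqrt hQb
    have h6 : ai * Real.sqrt (ci * cj) ≤ Real.sqrt abar * ((ai * ci + aj * cj) / 2) := by
      rw [h3]
      exact le_trans h4 (mul_le_mul_of_nonneg_left h5 (Real.sqrt_nonneg _))
    calc ai * (Real.sqrt c0 * Real.sqrt (qi / qj) * Real.sqrt (ci * cj))
        = Real.sqrt c0 * Real.sqrt (qi / qj) * (ai * Real.sqrt (ci * cj)) := by ring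
      _ ≤ Real.sqrt c0 * Real.sqrt (qi / qj) *
          (Real.sqrt abar * ((ai * ci + aj * cj) / 2)) := by
          apply mul_le_mul_of_nonneg_left h6 (by positivity)
      _ ≤ Real.sqrt δ * Real.sqrt Qbar * (Real.sqrt abar * ((ai * ci + aj * cj) / 2)) := by
          apply mul_le_mul_of_nonneg_right _ (by positivity)
          exact mul_le_mul hd hqb (Real.sqrt_nonneg _) (Real.sqrt_nonneg _)
      _ = Real.sqrt δ * (Real.sqrt Qbar * Real.sqrt abar) * ((ai * ci + aj * cj) / 2) := by ring
  have hexp : ai * qi * (x - y) ^ 2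
      = ai * (c0 * ci) + (qi / qj) * (ai * cj) - 2 * (ai * (qi * (x * y))) := by
    have h0 : ai * qi * (x - y) ^ 2
        = ai * qi * x ^ 2 + ai * qi * y ^ 2 - 2 * (ai * (qi * (x * y))) := by ring
    rw [h0, hx2, hy2]
    field_simp
  have hmain : Qlow * alow * (aj * cj) ≤ (qi / qj) * (ai * cj) := by
    have h7 : alow * aj ≤ ai := by
      have := mul_le_mul_of_nonneg_right hal haj.le
      rwa [div_mul_cancel₀ _ haj.ne'] at this
    have h8 : alow * (aj * cj) ≤ ai * cj := by
      have := mul_le_mul_of_nonneg_right h7 hcj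
      linarith [this]
    calc Qlow * alow * (aj * cj) = Qlow * (alow * (aj * cj)) := by ring
      _ ≤ Qlow * (ai * cj) := mul_le_mul_of_nonneg_left h8 hQlow.le
      _ ≤ (qi / qj) * (ai * cj) := mul_le_mul_of_nonneg_right hQl (by positivity)
  have hpos : 0 ≤ ai * (c0 * ci) := by positivity
  rw [hexp]
  linarith

private lemma term_ub (qi qj ai aj ci cj c0 Qbar abar : ℝ)
    (hqi : 0 < qi) (hqj : 0 < qj) (hai : 0 < ai) (haj : 0 < aj)
    (hci : 0 ≤ ci) (hcj : 0 ≤ cj) (hc0 : 0 ≤ c0)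
    (hQb : qi / qj ≤ Qbar) (hab : ai / aj ≤ abar) :
    ai * qi * (Real.sqrt (c0 * ci / qi) - Real.sqrt (cj / qj)) ^ 2
      ≤ 2 * (c0 * (ai * ci)) + 2 * (Qbar * abar * (aj * cj)) := by
  have hq : (0:ℝ) < qi / qj := div_pos hqi hqj
  have ha' : (0:ℝ) < ai / aj := div_pos hai haj
  have hQb0 : 0 ≤ Qbar := le_trans hq.le hQb
  have hab0 : 0 ≤ abar := le_trans ha'.le hab
  set x := Real.sqrt (c0 * ci / qi)
  set y := Real.sqrt (cj / qj)
  have hx2 : x ^ 2 = c0 * ci / qi := Real.sq_sqrt (by positivity)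
  have hy2 : y ^ 2 = cj / qj := Real.sq_sqrt (by positivity)
  have h1 : (x - y) ^ 2 ≤ 2 * x ^ 2 + 2 * y ^ 2 := by nlinarith [sq_nonneg (x + y)]
  have h2 : ai * qi * (x - y) ^ 2 ≤ ai * qi * (2 * x ^ 2 + 2 * y ^ 2) :=
    mul_le_mul_of_nonneg_left h1 (by positivity)
  have h3 : ai * qi * (2 * x ^ 2 + 2 * y ^ 2)
      = 2 * (c0 * (ai * ci)) + 2 * ((qi / qj) * (ai * cj)) := by
    rw [hx2, hy2]; field_simp
  have h4 : ai ≤ abar * aj := by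
    have := mul_le_mul_of_nonneg_right hab haj.le
    rwa [div_mul_cancel₀ _ haj.ne'] at this
  have h5 : (qi / qj) * (ai * cj) ≤ Qbar * abar * (aj * cj) := by
    have h6 : ai * cj ≤ abar * (aj * cj) := by
      have := mul_le_mul_of_nonneg_right h4 hcj
      linarith [this]
    calc (qi / qj) * (ai * cj) ≤ Qbar * (ai * cj) :=
          mul_le_mul_of_nonneg_right hQb (by positivity)
      _ ≤ Qbar * (abar * (aj * cj)) := mul_le_mul_of_nonneg_left h6 hQb0
      _ = Qbar * abar * (aj * cj) := by ring
  linarith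

/-- Lemma 3.12: lower bound on the lower free energy dissipation when `c₁` is
small. Here `Q i`, `a i`, `c i` stand for `Q_{i+1}`, `a_{i+1}`, `c_{i+1}` of
the paper, so that `c 0 = c₁`. -/
theorem dissipation_lower_bound_small_c1 (Q a c : ℕ → ℝ)
    (Qbar Qlow abar alow aInf δ : ℝ)
    (hQ : ∀ i, 0 < Q i) (ha : ∀ i, 0 < a i) (hc : ∀ i, 0 ≤ c i)
    (haInf : 0 < aInf) (haInfle : ∀ i, aInf ≤ a i)
    (hQlow : 0 < Qlow) (hQratio : ∀ i, Qlow ≤ Q i / Q (i + 1) ∧ Q i / Q (i + 1) ≤ Qbar)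
    (halow : 0 < alow) (haratio : ∀ i, alow ≤ a i / a (i + 1) ∧ a i / a (i + 1) ≤ abar)
    (hδ : 0 < δ) (hc1 : c 0 < δ)
    (hsum : Summable (fun i => a i * c i)) :
    Qlow * alow * ((∑' i, a i * c i) - a 0 * δ) -
        2 * Real.sqrt δ * Real.sqrt (Qbar * abar) * ∑' i, a i * c i
      ≤ ∑' i, a i * Q i *
          (Real.sqrt (c 0 * c i / Q i) - Real.sqrt (c (i + 1) / Q (i + 1))) ^ 2 := by
  have hsum' : Summable (fun i => a (i + 1) * c (i + 1)) :=
    (summable_nat_add_iff (f := fun i => a i * c i) 1).2 hsum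
  have hshift : (∑' i, a (i + 1) * c (i + 1)) = (∑' i, a i * c i) - a 0 * c 0 := by
    have h0 := hsum.tsum_eq_zero_add
    linarith [h0]
  have hterm : ∀ i, Qlow * alow * (a (i + 1) * c (i + 1)) -
      Real.sqrt δ * Real.sqrt (Qbar * abar) * (a i * c i + a (i + 1) * c (i + 1))
      ≤ a i * Q i * (Real.sqrt (c 0 * c i / Q i) - Real.sqrt (c (i + 1) / Q (i + 1))) ^ 2 :=
    fun i =>
      term_lb (Q i) (Q (i + 1)) (a i) (a (i + 1)) (c i) (c (i + 1)) (c 0) δ Qlow Qbar alow abar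
        (hQ i) (hQ (i + 1)) (ha i) (ha (i + 1)) (hc i) (hc (i + 1)) (hc 0) hc1.le
        (hQratio i).1 (hQratio i).2 (haratio i).1 (haratio i).2 hQlow halow
  have hfub : ∀ i, a i * Q i *
      (Real.sqrt (c 0 * c i / Q i) - Real.sqrt (c (i + 1) / Q (i + 1))) ^ 2
      ≤ 2 * (c 0 * (a i * c i)) + 2 * (Qbar * abar * (a (i + 1) * c (i + 1))) :=
    fun i =>
      term_ub (Q i) (Q (i + 1)) (a i) (a (i + 1)) (c i) (c (i + 1)) (c 0) Qbar abar
        (hQ i) (hQ (i + 1)) (ha i) (ha (i + 1)) (hc i) (hc (i + 1)) (hc 0)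
        (hQratio i).2 (haratio i).2
  have hfnn : ∀ i, (0:ℝ) ≤ a i * Q i *
      (Real.sqrt (c 0 * c i / Q i) - Real.sqrt (c (i + 1) / Q (i + 1))) ^ 2 := fun i =>
    mul_nonneg (mul_nonneg (ha i).le (hQ i).le) (sq_nonneg _)
  have hsumh : Summable (fun i =>
      2 * (c 0 * (a i * c i)) + 2 * (Qbar * abar * (a (i + 1) * c (i + 1)))) := by
    have h1 : Summable (fun i => 2 * (c 0 * (a i * c i))) := by
      have := hsum.mul_left (2 * c 0)
      simpa [mul_assoc] using this
    have h2 : Summable (fun i => 2 * (Qbar * abar * (a (i + 1) * c (i + 1)))) := by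
      have := hsum'.mul_left (2 * (Qbar * abar))
      simpa [mul_assoc] using this
    exact h1.add h2
  have hsumf : Summable (fun i => a i * Q i *
      (Real.sqrt (c 0 * c i / Q i) - Real.sqrt (c (i + 1) / Q (i + 1))) ^ 2) :=
    Summable.of_nonneg_of_le hfnn hfub hsumh
  have hsumg1 : Summable (fun i => Qlow * alow * (a (i + 1) * c (i + 1))) :=
    hsum'.mul_left _
  have hsumg2 : Summable (fun i =>
      Real.sqrt δ * Real.sqrt (Qbar * abar) * (a i * c i + a (i + 1) * c (i + 1))) :=
    (hsum.add hsum').mul_left _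
  have htsum : (∑' i, (Qlow * alow * (a (i + 1) * c (i + 1)) -
      Real.sqrt δ * Real.sqrt (Qbar * abar) * (a i * c i + a (i + 1) * c (i + 1))))
      ≤ ∑' i, a i * Q i *
          (Real.sqrt (c 0 * c i / Q i) - Real.sqrt (c (i + 1) / Q (i + 1))) ^ 2 :=
    Summable.tsum_le_tsum hterm (hsumg1.sub hsumg2) hsumf
  have hgval : (∑' i, (Qlow * alow * (a (i + 1) * c (i + 1)) -
      Real.sqrt δ * Real.sqrt (Qbar * abar) * (a i * c i + a (i + 1) * c (i + 1))))
      = Qlow * alow * ((∑' i, a i * c i) - a 0 * c 0) -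
        Real.sqrt δ * Real.sqrt (Qbar * abar) *
          ((∑' i, a i * c i) + ((∑' i, a i * c i) - a 0 * c 0)) := by
    rw [Summable.tsum_sub hsumg1 hsumg2, tsum_mul_left, tsum_mul_left, Summable.tsum_add hsum hsum', hshift]
  have hqa : (0:ℝ) ≤ Real.sqrt δ * Real.sqrt (Qbar * abar) := by positivity
  have h00 : (0:ℝ) ≤ a 0 * c 0 := mul_nonneg (ha 0).le (hc 0)
  have h0δ : a 0 * c 0 ≤ a 0 * δ := mul_le_mul_of_nonneg_left hc1.le (ha 0).le
  have hLHS : Qlow * alow * ((∑' i, a i * c i) - a 0 * δ) -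
      2 * Real.sqrt δ * Real.sqrt (Qbar * abar) * (∑' i, a i * c i)
      ≤ Qlow * alow * ((∑' i, a i * c i) - a 0 * c 0) -
        Real.sqrt δ * Real.sqrt (Qbar * abar) *
          ((∑' i, a i * c i) + ((∑' i, a i * c i) - a 0 * c 0)) := by
    have h1 : Qlow * alow * ((∑' i, a i * c i) - a 0 * δ)
        ≤ Qlow * alow * ((∑' i, a i * c i) - a 0 * c 0) :=
      mul_le_mul_of_nonneg_left (by linarith) (by positivity)
    have h2 : Real.sqrt δ * Real.sqrt (Qbar * abar) *
        ((∑' i, a i * c i) + ((∑' i, a i * c i) - a 0 * c 0))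
        ≤ Real.sqrt δ * Real.sqrt (Qbar * abar) * (2 * (∑' i, a i * c i)) :=
      mul_le_mul_of_nonneg_left (by linarith) hqa
    nlinarith [h1, h2]
  rw [← hgval] at hLHS
  exact le_trans hLHS htsum
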